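/- Let v ∈ ℝⁿ and let γ, β be real numbers. Suppose that for every subset S ⊆ {1,…,n}, ∑_{i∈S} v_i ≥ γ·(|S| − β). Then for every vector z ∈ ℝⁿ with 0 ≤ z_i ≤ 1 for all i, we have ⟨z, v⟩ ≥ γ·(∑_{i=1}^n z_i − β). -/

import Mathlib

set_option autoImplicit false

/-- If `∑_{i∈S} vᵢ ≥ γ(|S| − β)` for every subset `S ⊆ [n]`, then
for every `z` with `0 ≤ zᵢ ≤ 1`, `⟨z, v⟩ ≥ γ(∑ᵢ zᵢ − β)`. -/
theorem stmt_9 (n : ℕ) (v : Fin n → ℝ) (γ β : ℝ)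
    (hS : ∀ S : Finset (Fin n), γ * ((S.card : ℝ) - β) ≤ ∑ i ∈ S, v i)
    (z : Fin n → ℝ) (hz : ∀ i, 0 ≤ z i ∧ z i ≤ 1) :
    γ * ((∑ i, z i) - β) ≤ ∑ i, z i * v i := by
  set S : Finset (Fin n) := Finset.univ.filter (fun i => v i < γ) with hSdef
  have hcard : ∑ i ∈ S, (1 : ℝ) = (S.card : ℝ) := by simp
  have h1 : -(γ * β) ≤ ∑ i ∈ S, (v i - γ) := by
    have h := hS S
    have : ∑ i ∈ S, (v i - γ) = (∑ i ∈ S, v i) - (S.card : ℝ) * γ := by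
      rw [Finset.sum_sub_distrib]
      simp [mul_comm]
    rw [this]
    nlinarith [h]
  have h2 : ∑ i ∈ S, (v i - γ) ≤ ∑ i, z i * (v i - γ) := by
    have : ∑ i ∈ S, (v i - γ) = ∑ i, (if v i < γ then (v i - γ) else 0) := by
      rw [hSdef, Finset.sum_filter]
    rw [this]
    apply Finset.sum_le_sum
    intro i _
    obtain ⟨h0, h1⟩ := hz i
    by_cases hc : v i < γ
    · simp only [hc, if_true]
      nlinarith
    · simp only [hc, if_false]
      push_neg at hc
      nlinarith
  have h3 : ∑ i, z i * (v i - γ) = (∑ i, z i * v i) - γ * ∑ i, z i := by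
    rw [Finset.mul_sum, ← Finset.sum_sub_distrib]
    congr 1; ext i; ring
  nlinarith [h1, h2, h3]
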